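/- For every x ∈ X, the family (w(q) · exp(i ⟪v_q, x⟫))_{q ∈ Q} is square-summable, i.e. Φ(x) ∈ ℓ²(Q, ℂ) with ‖Φ(x)‖ = 1, and the map Φ : X → ℓ²(Q, ℂ) is continuous. (Claim E.1: Φ maps X continuously into the unit sphere of E = ℓ²(Q,ℂ); hence the kernel k(x,y) = ⟪Φ(x), Φ(y)⟫ is bounded and continuous.) -/

import Mathlib

open scoped ENNReal


/-- Claim E.1: the feature map `Φ(x)(q) = w(q) · exp(i⟪v_q, x⟫)`, where
`v_q = ∑_{n ∈ supp q} (q n) • b n` for a Hilbert basis `(b n)` of the separable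
infinite-dimensional real Hilbert space `X` and `Q = ℕ →₀ ℚ`, maps `X`
continuously into the unit sphere of `ℓ²(Q, ℂ)`. -/
theorem stmt_10 {X : Type*} [NormedAddCommGroup X] [InnerProductSpace ℝ X] [CompleteSpace X]
    (b : HilbertBasis ℕ ℝ X)
    (w : (ℕ →₀ ℚ) → ℝ) (hw1 : HasSum (fun q => w q ^ 2) 1)
    (hw : ∀ q, 0 < w q ∧ w q < 1) :
    (∀ x : X, Memℓp (fun q : ℕ →₀ ℚ => (w q : ℂ) *
      Complex.exp (Complex.I *
        ((inner ℝ (∑ n ∈ q.support, (q n : ℝ) • b n) x : ℝ) : ℂ))) 2) ∧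
    ∃ Φ : X → lp (fun _ : ℕ →₀ ℚ => ℂ) 2,
      (∀ (x : X) (q : ℕ →₀ ℚ), Φ x q = (w q : ℂ) *
        Complex.exp (Complex.I *
          ((inner ℝ (∑ n ∈ q.support, (q n : ℝ) • b n) x : ℝ) : ℂ))) ∧
      (∀ x, ‖Φ x‖ = 1) ∧ Continuous Φ := by
  classical
  set f : X → (ℕ →₀ ℚ) → ℂ := fun x q => (w q : ℂ) *
      Complex.exp (Complex.I *
        ((inner ℝ (∑ n ∈ q.support, (q n : ℝ) • b n) x : ℝ) : ℂ)) with hfdef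
  have hnormf : ∀ x q, ‖f x q‖ = w q := by
    intro x q
    simp [hfdef, Complex.norm_exp, abs_of_pos (hw q).1]
  have htoReal : ((2 : ℝ≥0∞)).toReal = 2 := by norm_num
  have hsum2 : Summable fun q => w q ^ 2 := hw1.summable
  have hmem : ∀ x, Memℓp (f x) 2 := by
    intro x
    apply memℓp_gen
    refine hsum2.congr fun q => ?_
    rw [htoReal, hnormf, show (2:ℝ) = ((2:ℕ):ℝ) by norm_num, Real.rpow_natCast]
  refine ⟨hmem, ⟨fun x => ⟨f x, hmem x⟩, fun x q => rfl, ?_, ?_⟩⟩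
  · -- norm = 1
    intro x
    set Φx : lp (fun _ : ℕ →₀ ℚ => ℂ) 2 := ⟨f x, hmem x⟩
    have h := lp.norm_rpow_eq_tsum (p := 2) (by norm_num) Φx
    rw [htoReal] at h
    have hcoe : ∀ q, ‖Φx q‖ = w q := fun q => hnormf x q
    have : ‖Φx‖ ^ (2:ℝ) = 1 := by
      rw [h]
      have : ∀ q, ‖Φx q‖ ^ (2:ℝ) = w q ^ 2 := by
        intro q
        rw [hcoe, show (2:ℝ) = ((2:ℕ):ℝ) by norm_num, Real.rpow_natCast]
      rw [tsum_congr this, hw1.tsum_eq]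
    rw [show (2:ℝ) = ((2:ℕ):ℝ) by norm_num, Real.rpow_natCast] at this
    nlinarith [norm_nonneg Φx]
  · -- continuity
    rw [Metric.continuous_iff]
    intro x ε hε
    obtain ⟨S, hS⟩ : ∃ S : Finset (ℕ →₀ ℚ),
        ∑' q : {q : (ℕ →₀ ℚ) // q ∉ S}, w q ^ 2 < ε ^ 2 / 8 := by
      have := (tendsto_order.1 (tendsto_tsum_compl_atTop_zero
        (fun q : ℕ →₀ ℚ => w q ^ 2))).2 _ (by positivity : (0:ℝ) < ε ^ 2 / 8)
      exact this.exists
    have hfc : ∀ q, Continuous fun y : X => f y q := by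
      intro q
      apply continuous_const.mul
      exact Complex.continuous_exp.comp (continuous_const.mul
        (Complex.continuous_ofReal.comp (Continuous.inner continuous_const continuous_id)))
    have hcontS : Continuous fun y : X => ∑ q ∈ S, ‖f y q - f x q‖ ^ 2 := by
      apply continuous_finset_sum
      intro q _
      exact (((hfc q).sub continuous_const).norm).pow 2
    obtain ⟨δ, hδpos, hδ⟩ : ∃ δ > 0, ∀ y : X, dist y x < δ →
        ∑ q ∈ S, ‖f y q - f x q‖ ^ 2 < ε ^ 2 / 2 := by
      have hx0 : (∑ q ∈ S, ‖f x q - f x q‖ ^ 2) = 0 := by simp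
      have := Metric.continuousAt_iff.1 (hcontS.continuousAt (x := x)) (ε ^ 2 / 2)
        (by positivity)
      obtain ⟨δ, hδpos, hδ⟩ := this
      refine ⟨δ, hδpos, fun y hy => ?_⟩
      have := hδ hy
      rw [Real.dist_eq, hx0, sub_zero] at this
      calc ∑ q ∈ S, ‖f y q - f x q‖ ^ 2 ≤ |∑ q ∈ S, ‖f y q - f x q‖ ^ 2| := le_abs_self _
        _ < ε ^ 2 / 2 := this
    refine ⟨δ, hδpos, fun y hy => ?_⟩
    -- main estimate
    set g : (ℕ →₀ ℚ) → ℝ := fun q => ‖f y q - f x q‖ ^ 2 with hgdef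
    have hgnonneg : ∀ q, 0 ≤ g q := fun q => by positivity
    have hgle : ∀ q, g q ≤ 4 * w q ^ 2 := by
      intro q
      have h1 : ‖f y q - f x q‖ ≤ 2 * w q := by
        calc ‖f y q - f x q‖ ≤ ‖f y q‖ + ‖f x q‖ := norm_sub_le _ _
          _ = 2 * w q := by rw [hnormf, hnormf]; ring
      calc g q = ‖f y q - f x q‖ ^ 2 := rfl
        _ ≤ (2 * w q) ^ 2 := by
            apply pow_le_pow_left₀ (norm_nonneg _) h1
        _ = 4 * w q ^ 2 := by ring
    have hgsum : Summable g :=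
      Summable.of_nonneg_of_le hgnonneg hgle (hsum2.mul_left 4)
    have hkey : dist (⟨f y, hmem y⟩ : lp (fun _ : ℕ →₀ ℚ => ℂ) 2) ⟨f x, hmem x⟩ ^ 2
        = ∑' q, g q := by
      rw [dist_eq_norm]
      have h := lp.norm_rpow_eq_tsum (p := 2) (by norm_num)
        ((⟨f y, hmem y⟩ : lp (fun _ : ℕ →₀ ℚ => ℂ) 2) - ⟨f x, hmem x⟩)
      rw [htoReal] at h
      simp only [show (2:ℝ) = ((2:ℕ):ℝ) by norm_num, Real.rpow_natCast] at h
      rw [h]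
      refine tsum_congr fun q => ?_
      have hc : ((⟨f y, hmem y⟩ : lp (fun _ : ℕ →₀ ℚ => ℂ) 2) - ⟨f x, hmem x⟩) q
          = f y q - f x q := rfl
      rw [hc]
    have hsplit : ∑ q ∈ S, g q + ∑' q : ↑((S : Set (ℕ →₀ ℚ))ᶜ), g q = ∑' q, g q :=
      hgsum.sum_add_tsum_compl
    have htail : ∑' q : ↑((S : Set (ℕ →₀ ℚ))ᶜ), g q ≤ 4 * (ε ^ 2 / 8) := by
      have h1 : ∑' q : ↑((S : Set (ℕ →₀ ℚ))ᶜ), g q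
          ≤ ∑' q : ↑((S : Set (ℕ →₀ ℚ))ᶜ), 4 * w (q : ℕ →₀ ℚ) ^ 2 := by
        apply Summable.tsum_le_tsum
        · exact fun q => hgle q
        · exact hgsum.subtype _
        · exact (hsum2.mul_left 4).subtype _
      have h2 : ∑' q : ↑((S : Set (ℕ →₀ ℚ))ᶜ), 4 * w (q : ℕ →₀ ℚ) ^ 2
          = 4 * ∑' q : ↑((S : Set (ℕ →₀ ℚ))ᶜ), w (q : ℕ →₀ ℚ) ^ 2 := tsum_mul_left
      have h3 : ∑' q : ↑((S : Set (ℕ →₀ ℚ))ᶜ), w (q : ℕ →₀ ℚ) ^ 2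
          = ∑' q : {q : (ℕ →₀ ℚ) // q ∉ S}, w (q : ℕ →₀ ℚ) ^ 2 := rfl
      rw [h2, h3] at h1
      calc ∑' q : ↑((S : Set (ℕ →₀ ℚ))ᶜ), g q
          ≤ 4 * ∑' q : {q : (ℕ →₀ ℚ) // q ∉ S}, w (q : ℕ →₀ ℚ) ^ 2 := h1
        _ ≤ 4 * (ε ^ 2 / 8) := by nlinarith [hS]
    have hhead : ∑ q ∈ S, g q < ε ^ 2 / 2 := hδ y hy
    have hd2 : dist (⟨f y, hmem y⟩ : lp (fun _ : ℕ →₀ ℚ => ℂ) 2) ⟨f x, hmem x⟩ ^ 2 < ε ^ 2 := by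
      rw [hkey, ← hsplit]
      nlinarith
    exact lt_of_pow_lt_pow_left₀ 2 hε.le hd2
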